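/- Let f : ℝⁿ → ℝ be continuous, positively homogeneous of degree d > 0, with f(x) > 0 for x ≠ 0. Then the real log canonical threshold of f at 0, defined as sup{α > 0 : f^(-α) is integrable on some neighborhood of 0}, equals n/d. -/
import Mathlib

open MeasureTheory Metric Set Real
open scoped ENNReal

private lemma rlct_rpow_inv_cancel {a s : ℝ} (ha : 0 ≤ a) (hs : s ≠ 0) :
    (a ^ (-s)) ^ (-s⁻¹) = a := by
  rw [← Real.rpow_mul ha, neg_mul_neg, mul_inv_cancel₀ hs, Real.rpow_one]

private lemma rlct_subset {n : ℕ} {s t : ℝ} (hs : 0 < s) (ht : 0 < t) :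
    {a : EuclideanSpace ℝ (Fin n) | t ≤ ‖a‖ ^ (-s)} ⊆ closedBall 0 (t ^ (-s⁻¹)) := by
  intro a ha
  simp only [mem_setOf_eq] at ha
  have ha0 : 0 ≤ ‖a‖ := norm_nonneg a
  rw [mem_closedBall_zero_iff]
  have hpow : 0 < ‖a‖ ^ (-s) := lt_of_lt_of_le ht ha
  calc ‖a‖ = (‖a‖ ^ (-s)) ^ (-s⁻¹) := (rlct_rpow_inv_cancel ha0 hs.ne').symm
    _ ≤ t ^ (-s⁻¹) :=
        Real.rpow_le_rpow_of_nonpos ht ha (neg_nonpos.mpr (inv_nonneg.mpr hs.le))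

private lemma rlct_pow_eq {t s : ℝ} (n : ℕ) (ht : 0 < t) (hs : s ≠ 0) :
    (t ^ (-s⁻¹)) ^ n = t ^ (-((n : ℝ) / s)) := by
  rw [← Real.rpow_natCast (t ^ (-s⁻¹)) n, ← Real.rpow_mul ht.le]
  congr 1
  field_simp

/-- Integrability of `‖x‖ ^ (-s)` near 0 when `s < n`. -/
private lemma rlct_integrable {n : ℕ} {s ε : ℝ} (hs : 0 < s) (hsn : s < n) (hε : 0 < ε) :
    IntegrableOn (fun x : EuclideanSpace ℝ (Fin n) => ‖x‖ ^ (-s))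
      (ball (0 : EuclideanSpace ℝ (Fin n)) ε) := by
  have hmeas : Measurable (fun x : EuclideanSpace ℝ (Fin n) => ‖x‖ ^ (-s)) := by fun_prop
  have hnn : ∀ x : EuclideanSpace ℝ (Fin n), 0 ≤ ‖x‖ ^ (-s) :=
    fun x => Real.rpow_nonneg (norm_nonneg x) _
  refine ⟨hmeas.aestronglyMeasurable, ?_⟩
  rw [hasFiniteIntegral_iff_ofReal (ae_of_all _ hnn)]
  set μ := volume.restrict (ball (0 : EuclideanSpace ℝ (Fin n)) ε) with hμ
  rw [lintegral_eq_lintegral_meas_le μ (ae_of_all _ hnn) hmeas.aemeasurable]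
  set v := volume (ball (0 : EuclideanSpace ℝ (Fin n)) 1) with hv
  have hle : ∀ S : Set (EuclideanSpace ℝ (Fin n)), μ S ≤ volume S := by
    intro S
    exact Measure.restrict_le_self S
  calc ∫⁻ t in Ioi (0:ℝ), μ {a | t ≤ ‖a‖ ^ (-s)}
      ≤ ∫⁻ t in Ioc (0:ℝ) 1 ∪ Ioi 1, μ {a | t ≤ ‖a‖ ^ (-s)} :=
        lintegral_mono_set Ioi_subset_Ioc_union_Ioi
    _ ≤ (∫⁻ t in Ioc (0:ℝ) 1, μ {a | t ≤ ‖a‖ ^ (-s)})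
        + ∫⁻ t in Ioi (1:ℝ), μ {a | t ≤ ‖a‖ ^ (-s)} := lintegral_union_le _ _ _
    _ < ∞ := by
        refine ENNReal.add_lt_top.2 ⟨?_, ?_⟩
        · calc (∫⁻ t in Ioc (0:ℝ) 1, μ {a | t ≤ ‖a‖ ^ (-s)})
              ≤ ∫⁻ _ in Ioc (0:ℝ) 1, volume (ball (0 : EuclideanSpace ℝ (Fin n)) ε) := by
                refine lintegral_mono (fun t => ?_)
                calc μ {a | t ≤ ‖a‖ ^ (-s)} ≤ μ univ := measure_mono (subset_univ _)
                  _ = volume (ball (0 : EuclideanSpace ℝ (Fin n)) ε) := by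
                      rw [hμ, Measure.restrict_apply_univ]
          _ < ∞ := by
                rw [setLIntegral_const]
                exact ENNReal.mul_lt_top measure_ball_lt_top (by simp [Real.volume_Ioc])
        · have hbound : ∀ t ∈ Ioi (1:ℝ), μ {a : EuclideanSpace ℝ (Fin n) | t ≤ ‖a‖ ^ (-s)}
              ≤ ENNReal.ofReal (t ^ (-((n : ℝ) / s))) * v := by
            intro t ht
            have ht0 : (0:ℝ) < t := lt_trans one_pos ht
            calc μ {a : EuclideanSpace ℝ (Fin n) | t ≤ ‖a‖ ^ (-s)}
                ≤ volume {a : EuclideanSpace ℝ (Fin n) | t ≤ ‖a‖ ^ (-s)} := hle _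
              _ ≤ volume (closedBall (0 : EuclideanSpace ℝ (Fin n)) (t ^ (-s⁻¹))) :=
                  measure_mono (rlct_subset hs ht0)
              _ = ENNReal.ofReal ((t ^ (-s⁻¹)) ^ Module.finrank ℝ (EuclideanSpace ℝ (Fin n))) * v := by
                  rw [Measure.addHaar_closedBall _ _ (Real.rpow_nonneg ht0.le _)]
              _ = ENNReal.ofReal (t ^ (-((n : ℝ) / s))) * v := by
                  rw [finrank_euclideanSpace_fin, rlct_pow_eq n ht0 hs.ne']
          calc (∫⁻ t in Ioi (1:ℝ), μ {a | t ≤ ‖a‖ ^ (-s)})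
              ≤ ∫⁻ t in Ioi (1:ℝ), ENNReal.ofReal (t ^ (-((n : ℝ) / s))) * v :=
                setLIntegral_mono' measurableSet_Ioi hbound
            _ = (∫⁻ t in Ioi (1:ℝ), ENNReal.ofReal (t ^ (-((n : ℝ) / s)))) * v :=
                lintegral_mul_const' v _ (measure_ball_lt_top).ne
            _ < ∞ := by
                refine ENNReal.mul_lt_top ?_ measure_ball_lt_top
                refine IntegrableOn.setLIntegral_lt_top ?_
                refine integrableOn_Ioi_rpow_of_lt ?_ one_pos
                rw [neg_lt_neg_iff]
                exact (one_lt_div hs).mpr hsn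

/-- Non-integrability of `‖x‖ ^ (-s)` near 0 when `n ≤ s`. -/
private lemma rlct_not_integrable {n : ℕ} (hn : 1 ≤ n) {s ε : ℝ} (hns : (n : ℝ) ≤ s)
    (hε : 0 < ε) :
    ¬ IntegrableOn (fun x : EuclideanSpace ℝ (Fin n) => ‖x‖ ^ (-s))
      (ball (0 : EuclideanSpace ℝ (Fin n)) ε) := by
  have hs : (0:ℝ) < s := lt_of_lt_of_le (by exact_mod_cast hn) hns
  haveI : Nontrivial (EuclideanSpace ℝ (Fin n)) := by
    apply Module.nontrivial_of_finrank_pos (R := ℝ)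
    rw [finrank_euclideanSpace_fin]
    exact hn
  have hmeas : Measurable (fun x : EuclideanSpace ℝ (Fin n) => ‖x‖ ^ (-s)) := by fun_prop
  have hnn : ∀ x : EuclideanSpace ℝ (Fin n), 0 ≤ ‖x‖ ^ (-s) :=
    fun x => Real.rpow_nonneg (norm_nonneg x) _
  intro h
  have hfin := (hasFiniteIntegral_iff_ofReal (ae_of_all _ hnn)).mp h.2
  set μ := volume.restrict (ball (0 : EuclideanSpace ℝ (Fin n)) ε) with hμ
  rw [lintegral_eq_lintegral_meas_le μ (ae_of_all _ hnn) hmeas.aemeasurable] at hfin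
  set v := volume (ball (0 : EuclideanSpace ℝ (Fin n)) 1) with hv
  set T := ε ^ (-s) with hT
  have hT0 : 0 < T := Real.rpow_pos_of_pos hε _
  -- lower bound on the measure of superlevel sets for t > T
  have hbound : ∀ t ∈ Ioi T, ENNReal.ofReal (t ^ (-((n : ℝ) / s))) * v
      ≤ μ {a : EuclideanSpace ℝ (Fin n) | t ≤ ‖a‖ ^ (-s)} := by
    intro t ht
    have ht0 : (0:ℝ) < t := lt_trans hT0 ht
    have hrad : t ^ (-s⁻¹) < ε := by
      calc t ^ (-s⁻¹) < T ^ (-s⁻¹) :=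
            Real.rpow_lt_rpow_of_neg hT0 ht (by simp [hs])
        _ = ε := rlct_rpow_inv_cancel hε.le hs.ne'
    have hsubset : ball (0 : EuclideanSpace ℝ (Fin n)) (t ^ (-s⁻¹)) \ {0}
        ⊆ {a : EuclideanSpace ℝ (Fin n) | t ≤ ‖a‖ ^ (-s)} ∩ ball 0 ε := by
      rintro a ⟨haball, ha0⟩
      have hna : 0 < ‖a‖ := norm_pos_iff.mpr ha0
      have hnr : ‖a‖ < t ^ (-s⁻¹) := mem_ball_zero_iff.mp haball
      constructor
      · simp only [mem_setOf_eq]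
        calc t = (t ^ (-s⁻¹)) ^ (-s) := by
              rw [← Real.rpow_mul ht0.le, neg_mul_neg, inv_mul_cancel₀ hs.ne', Real.rpow_one]
          _ ≤ ‖a‖ ^ (-s) :=
              Real.rpow_le_rpow_of_nonpos hna hnr.le (neg_nonpos.mpr hs.le)
      · exact mem_ball_zero_iff.mpr (lt_trans hnr hrad)
    have hmeasset : MeasurableSet {a : EuclideanSpace ℝ (Fin n) | t ≤ ‖a‖ ^ (-s)} :=
      measurableSet_le measurable_const hmeas
    calc ENNReal.ofReal (t ^ (-((n : ℝ) / s))) * v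
        = volume (ball (0 : EuclideanSpace ℝ (Fin n)) (t ^ (-s⁻¹))) := by
          rw [Measure.addHaar_ball _ _ (Real.rpow_nonneg ht0.le _),
            finrank_euclideanSpace_fin, rlct_pow_eq n ht0 hs.ne']
      _ = volume (ball (0 : EuclideanSpace ℝ (Fin n)) (t ^ (-s⁻¹)) \ {0}) := by
          exact (measure_diff_null (measure_singleton 0)).symm
      _ ≤ volume ({a : EuclideanSpace ℝ (Fin n) | t ≤ ‖a‖ ^ (-s)} ∩ ball 0 ε) :=
          measure_mono hsubset
      _ = μ {a : EuclideanSpace ℝ (Fin n) | t ≤ ‖a‖ ^ (-s)} := by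
          rw [hμ, Measure.restrict_apply hmeasset]
  -- the lower-bound integral diverges
  have hdiv : (∫⁻ t in Ioi T, ENNReal.ofReal (t ^ (-((n : ℝ) / s))) * v) = ∞ := by
    rw [lintegral_mul_const' v _ (measure_ball_lt_top).ne]
    have hv0 : v ≠ 0 := (measure_ball_pos volume _ one_pos).ne'
    refine ENNReal.mul_eq_top.mpr (Or.inr ⟨?_, hv0⟩)
    -- ∫⁻ t in Ioi T, ofReal (t ^ (-(n/s))) = ∞
    by_contra hne
    have hint : IntegrableOn (fun t : ℝ => t ^ (-((n : ℝ) / s))) (Ioi T) := by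
      constructor
      · exact (by fun_prop : Measurable fun t : ℝ => t ^ (-((n : ℝ) / s))).aestronglyMeasurable
      · rw [hasFiniteIntegral_iff_ofReal]
        · exact lt_of_le_of_ne le_top hne
        · filter_upwards [ae_restrict_mem measurableSet_Ioi] with t ht
          exact Real.rpow_nonneg (le_of_lt (lt_trans hT0 ht)) _
    rw [integrableOn_Ioi_rpow_iff hT0] at hint
    have h1 : (n : ℝ) / s ≤ 1 := (div_le_one hs).mpr hns
    have h2 : (1:ℝ) < (n : ℝ) / s := by
      have := neg_lt_neg_iff.mp hint
      linarith
    linarith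
  have : (∫⁻ t in Ioi (0:ℝ), μ {a | t ≤ ‖a‖ ^ (-s)}) = ∞ := by
    refine eq_top_iff.mpr ?_
    calc (∞ : ℝ≥0∞) = ∫⁻ t in Ioi T, ENNReal.ofReal (t ^ (-((n : ℝ) / s))) * v := hdiv.symm
      _ ≤ ∫⁻ t in Ioi T, μ {a | t ≤ ‖a‖ ^ (-s)} := setLIntegral_mono' measurableSet_Ioi hbound
      _ ≤ ∫⁻ t in Ioi (0:ℝ), μ {a | t ≤ ‖a‖ ^ (-s)} :=
          lintegral_mono_set (Ioi_subset_Ioi hT0.le)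
  rw [this] at hfin
  exact (lt_irrefl _ hfin)

theorem rlct_homogeneous_pos (n : ℕ) (hn : 1 ≤ n) (d : ℝ) (hd : 0 < d)
    (f : EuclideanSpace ℝ (Fin n) → ℝ) (hf : Continuous f)
    (hhom : ∀ t : ℝ, 0 ≤ t → ∀ x, f (t • x) = t ^ d * f x)
    (hpos : ∀ x, x ≠ 0 → 0 < f x) :
    sSup {α : ℝ | 0 < α ∧ ∃ ε > 0, IntegrableOn (fun x => f x ^ (-α))
        (Metric.ball (0 : EuclideanSpace ℝ (Fin n)) ε)} = n / d := by
  haveI : Nontrivial (EuclideanSpace ℝ (Fin n)) := by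
    apply Module.nontrivial_of_finrank_pos (R := ℝ)
    rw [finrank_euclideanSpace_fin]
    exact hn
  have hfm : Measurable f := hf.measurable
  obtain ⟨x₀, hx₀s, hx₀min'⟩ :=
    (isCompact_sphere (0 : EuclideanSpace ℝ (Fin n)) 1).exists_isMinOn
      (NormedSpace.sphere_nonempty.mpr zero_le_one) hf.continuousOn
  obtain ⟨x₁, hx₁s, hx₁max'⟩ :=
    (isCompact_sphere (0 : EuclideanSpace ℝ (Fin n)) 1).exists_isMaxOn
      (NormedSpace.sphere_nonempty.mpr zero_le_one) hf.continuousOn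
  have hx₀min : ∀ y ∈ sphere (0 : EuclideanSpace ℝ (Fin n)) 1, f x₀ ≤ f y :=
    fun y hy => hx₀min' hy
  have hx₁max : ∀ y ∈ sphere (0 : EuclideanSpace ℝ (Fin n)) 1, f y ≤ f x₁ :=
    fun y hy => hx₁max' hy
  set m := f x₀ with hm_def
  set M := f x₁ with hM_def
  have hx₀0 : x₀ ≠ 0 := by
    intro h
    rw [h, mem_sphere_zero_iff_norm, norm_zero] at hx₀s
    norm_num at hx₀s
  have hx₁0 : x₁ ≠ 0 := by
    intro h
    rw [h, mem_sphere_zero_iff_norm, norm_zero] at hx₁s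
    norm_num at hx₁s
  have hm : 0 < m := hpos x₀ hx₀0
  have hM : 0 < M := hpos x₁ hx₁0
  have hf0 : f 0 = 0 := by
    have h := hhom 0 le_rfl 0
    rw [zero_smul, Real.zero_rpow hd.ne', zero_mul] at h
    exact h
  have key : ∀ x : EuclideanSpace ℝ (Fin n), x ≠ 0 →
      m * ‖x‖ ^ d ≤ f x ∧ f x ≤ M * ‖x‖ ^ d := by
    intro x hx
    have hxn : 0 < ‖x‖ := norm_pos_iff.mpr hx
    set u : EuclideanSpace ℝ (Fin n) := ‖x‖⁻¹ • x with hu_def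
    have hu : u ∈ sphere (0 : EuclideanSpace ℝ (Fin n)) 1 := by
      rw [mem_sphere_zero_iff_norm, hu_def, norm_smul, norm_inv, norm_norm,
        inv_mul_cancel₀ hxn.ne']
    have hxu : f x = ‖x‖ ^ d * f u := by
      have h := hhom ‖x‖ hxn.le u
      rw [hu_def, smul_smul, mul_inv_cancel₀ hxn.ne', one_smul] at h
      exact h
    have hpow : 0 < ‖x‖ ^ d := Real.rpow_pos_of_pos hxn d
    constructor
    · rw [hxu]
      nlinarith [hx₀min u hu]
    · rw [hxu]
      nlinarith [hx₁max u hu]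
  have hset : {α : ℝ | 0 < α ∧ ∃ ε > 0, IntegrableOn (fun x => f x ^ (-α))
        (Metric.ball (0 : EuclideanSpace ℝ (Fin n)) ε)} = Ioo 0 ((n : ℝ) / d) := by
    ext α
    simp only [mem_setOf_eq, mem_Ioo]
    constructor
    · rintro ⟨hα, ε, hε, hint⟩
      refine ⟨hα, ?_⟩
      by_contra hge
      push_neg at hge
      have hnd : (n : ℝ) ≤ α * d := by
        rw [div_le_iff₀ hd] at hge
        linarith
      refine rlct_not_integrable hn hnd hε ?_
      refine Integrable.mono' ((hint.const_mul (M ^ α))) ?_ ?_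
      · exact (by fun_prop : Measurable fun x : EuclideanSpace ℝ (Fin n) => ‖x‖ ^ (-(α * d))).aestronglyMeasurable
      · refine ae_of_all _ (fun x => ?_)
        rw [Real.norm_of_nonneg (Real.rpow_nonneg (norm_nonneg x) _)]
        rcases eq_or_ne x 0 with rfl | hx
        · simp only [norm_zero, Real.zero_rpow (neg_ne_zero.mpr (mul_pos hα hd).ne'), hf0,
            Real.zero_rpow (neg_ne_zero.mpr hα.ne'), mul_zero]
          exact le_rfl
        · have hfx : 0 < f x := hpos x hx
          have hxn : 0 < ‖x‖ := norm_pos_iff.mpr hx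
          have h1 : (M * ‖x‖ ^ d) ^ (-α) ≤ f x ^ (-α) :=
            Real.rpow_le_rpow_of_nonpos hfx (key x hx).2 (neg_nonpos.mpr hα.le)
          have h2 : (M * ‖x‖ ^ d) ^ (-α) = M ^ (-α) * ‖x‖ ^ (-(α * d)) := by
            rw [Real.mul_rpow hM.le (Real.rpow_nonneg (norm_nonneg x) d),
              ← Real.rpow_mul (norm_nonneg x)]
            ring_nf
          calc ‖x‖ ^ (-(α * d)) = M ^ α * (M ^ (-α) * ‖x‖ ^ (-(α * d))) := by
                rw [← mul_assoc, ← Real.rpow_add hM, add_neg_cancel, Real.rpow_zero, one_mul]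
            _ = M ^ α * (M * ‖x‖ ^ d) ^ (-α) := by rw [h2]
            _ ≤ M ^ α * f x ^ (-α) := by
                have : 0 ≤ M ^ α := Real.rpow_nonneg hM.le α
                nlinarith
    · rintro ⟨hα0, hα⟩
      refine ⟨hα0, 1, one_pos, ?_⟩
      have hαd : α * d < n := by
        rw [lt_div_iff₀ hd] at hα
        exact hα
      have base := rlct_integrable (mul_pos hα0 hd) hαd one_pos
      refine Integrable.mono' (base.const_mul (m ^ (-α))) ?_ ?_
      · exact (by fun_prop : Measurable fun x => f x ^ (-α)).aestronglyMeasurable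
      · refine ae_of_all _ (fun x => ?_)
        rcases eq_or_ne x 0 with rfl | hx
        · simp only [hf0, Real.zero_rpow (neg_ne_zero.mpr hα0.ne'), norm_zero,
            Real.zero_rpow (neg_ne_zero.mpr (mul_pos hα0 hd).ne'), mul_zero]
          exact le_rfl
        · have hfx : 0 < f x := hpos x hx
          have hxn : 0 < ‖x‖ := norm_pos_iff.mpr hx
          rw [Real.norm_of_nonneg (Real.rpow_nonneg hfx.le _)]
          have hmx : 0 < m * ‖x‖ ^ d := by positivity
          have h1 : f x ^ (-α) ≤ (m * ‖x‖ ^ d) ^ (-α) :=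
            Real.rpow_le_rpow_of_nonpos hmx (key x hx).1 (neg_nonpos.mpr hα0.le)
          have h2 : (m * ‖x‖ ^ d) ^ (-α) = m ^ (-α) * ‖x‖ ^ (-(α * d)) := by
            rw [Real.mul_rpow hm.le (Real.rpow_nonneg (norm_nonneg x) d),
              ← Real.rpow_mul (norm_nonneg x)]
            ring_nf
          rw [h2] at h1
          exact h1
  rw [hset]
  exact csSup_Ioo (div_pos (by exact_mod_cast hn) hd)
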